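/- A countably infinite causal set Ψ admits a natural labeling by ℤ if and only if at least one of the following holds: (i) Ψ is two-way infinite; (ii) Ψ is past-finite and has infinitely many minimal elements; (iii) Ψ is future-finite and has infinitely many maximal elements. -/

import Mathlib

open Set Function

namespace Stmt2Aux

variable {S : Type*} [PartialOrder S]

/-- Height-type function: strictly monotone and dominating an injection into ℕ. -/
noncomputable def mval (idx : S → ℕ) (h : ∀ x : S, {y : S | y < x}.Finite) (x : S) : ℕ :=
  max (idx x) (((h x).toFinset.attach.sup fun y => mval idx h y.1) + 1)
termination_by (h x).toFinset.card
decreasing_by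
  have hy : y.1 < x := (Set.Finite.mem_toFinset (h x)).mp y.2
  have hsub : (h y.1).toFinset ⊆ (h x).toFinset := by
    intro z hz
    simp only [Set.Finite.mem_toFinset, Set.mem_setOf_eq] at *
    exact hz.trans hy
  refine Finset.card_lt_card ⟨hsub, fun hba => ?_⟩
  have : y.1 ∈ (h y.1).toFinset := hba (by simpa [Set.Finite.mem_toFinset] using hy)
  simp [Set.Finite.mem_toFinset] at this

lemma mval_lt (idx : S → ℕ) (h : ∀ x : S, {y : S | y < x}.Finite) {y x : S} (hyx : y < x) :
    mval idx h y < mval idx h x := by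
  have hmem : y ∈ (h x).toFinset := by simpa [Set.Finite.mem_toFinset] using hyx
  have hle : mval idx h y ≤ (h x).toFinset.attach.sup fun z => mval idx h z.1 :=
    Finset.le_sup (f := fun z => mval idx h z.1) (Finset.mem_attach _ ⟨y, hmem⟩)
  calc mval idx h y < ((h x).toFinset.attach.sup fun z => mval idx h z.1) + 1 :=
        Nat.lt_succ_of_le hle
    _ ≤ max (idx x) (((h x).toFinset.attach.sup fun z => mval idx h z.1) + 1) := le_max_right _ _
    _ = mval idx h x := by rw [mval]

lemma idx_le_mval (idx : S → ℕ) (h : ∀ x : S, {y : S | y < x}.Finite) (x : S) :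
    idx x ≤ mval idx h x := by
  rw [mval]; exact le_max_left _ _



section Rank

variable (idx : S → ℕ) (h : ∀ x : S, {y : S | y < x}.Finite) (hidx : Function.Injective idx)

include hidx

/-- linear key -/
noncomputable def kval (x : S) : ℕ ×ₗ ℕ := toLex (mval idx h x, idx x)

lemma kval_inj : Function.Injective (kval idx h) := by
  intro a b hab
  have : (mval idx h a, idx a) = (mval idx h b, idx b) := congrArg ofLex hab
  exact hidx (congrArg Prod.snd this)

omit hidx in
lemma kval_lt_of_lt {a b : S} (hab : a < b) : kval idx h a < kval idx h b := by
  rw [kval, kval, Prod.Lex.lt_iff]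
  exact Or.inl (mval_lt idx h hab)

lemma kval_pred_finite (x : S) : {y : S | kval idx h y < kval idx h x}.Finite := by
  have hsub : {y : S | kval idx h y < kval idx h x} ⊆ idx ⁻¹' (Set.Iic (mval idx h x)) := by
    intro y hy
    have : mval idx h y ≤ mval idx h x := by
      rcases (Prod.Lex.lt_iff).mp hy with h1 | h1
      · exact le_of_lt h1
      · exact le_of_eq h1.1
    exact le_trans (idx_le_mval idx h y) this
  exact Set.Finite.subset ((Set.finite_Iic _).preimage hidx.injOn) hsub

/-- rank of an element: number of key-predecessors -/
noncomputable def rnk (x : S) : ℕ := (kval_pred_finite idx h hidx x).toFinset.card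

lemma rnk_lt_of_kval_lt {a b : S} (hab : kval idx h a < kval idx h b) :
    rnk idx h hidx a < rnk idx h hidx b := by
  apply Finset.card_lt_card
  constructor
  · intro z hz
    simp only [Set.Finite.mem_toFinset, Set.mem_setOf_eq] at *
    exact lt_trans hz hab
  · intro hcon
    have : a ∈ (kval_pred_finite idx h hidx a).toFinset :=
      hcon (by simpa [Set.Finite.mem_toFinset] using hab)
    simp [Set.Finite.mem_toFinset] at this

lemma rnk_inj : Function.Injective (rnk idx h hidx) := by
  intro a b hab
  by_contra hne
  rcases lt_or_gt_of_ne (fun hk => hne (kval_inj idx h hidx hk)) with hk | hk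
  · exact absurd hab (Nat.ne_of_lt (rnk_lt_of_kval_lt idx h hidx hk))
  · exact absurd hab.symm (Nat.ne_of_lt (rnk_lt_of_kval_lt idx h hidx hk))

lemma rnk_step {x : S} (hpos : 0 < rnk idx h hidx x) :
    ∃ z : S, rnk idx h hidx x = rnk idx h hidx z + 1 := by
  classical
  have hne : ((kval_pred_finite idx h hidx x).toFinset).Nonempty :=
    Finset.card_pos.mp hpos
  obtain ⟨z, hz, hzmax⟩ := Finset.exists_max_image _ (kval idx h) hne
  refine ⟨z, ?_⟩
  have hzx : kval idx h z < kval idx h x := by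
    simpa [Set.Finite.mem_toFinset] using hz
  have hins : (kval_pred_finite idx h hidx x).toFinset
      = insert z (kval_pred_finite idx h hidx z).toFinset := by
    ext w
    simp only [Set.Finite.mem_toFinset, Set.mem_setOf_eq, Finset.mem_insert]
    constructor
    · intro hw
      have hwz : kval idx h w ≤ kval idx h z :=
        hzmax w (by simpa [Set.Finite.mem_toFinset] using hw)
      rcases lt_or_eq_of_le hwz with h1 | h1
      · exact Or.inr h1
      · exact Or.inl (kval_inj idx h hidx h1)
    · rintro (rfl | hw)
      · exact hzx
      · exact lt_trans hw hzx
  rw [rnk, hins, Finset.card_insert_of_notMem (by simp [Set.Finite.mem_toFinset])]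
  rfl

lemma rnk_surj_aux : ∀ m : ℕ, ∀ x : S, rnk idx h hidx x = m →
    ∀ n ≤ m, ∃ z : S, rnk idx h hidx z = n := by
  intro m
  induction m using Nat.strong_induction_on with
  | _ m ih =>
    intro x hx n hn
    rcases eq_or_lt_of_le hn with rfl | hlt
    · exact ⟨x, hx⟩
    · have hpos : 0 < rnk idx h hidx x := by omega
      obtain ⟨z, hz⟩ := rnk_step idx h hidx hpos
      have hzm : rnk idx h hidx z = m - 1 := by omega
      exact ih (m-1) (by omega) z hzm n (by omega)

lemma rnk_surj [Infinite S] : Function.Surjective (rnk idx h hidx) := by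
  intro n
  -- there is an element of rank ≥ n
  have hub : ∃ x : S, n ≤ rnk idx h hidx x := by
    by_contra hcon
    push_neg at hcon
    have hfin : Finite S := Finite.of_injective
      (fun x => (⟨rnk idx h hidx x, hcon x⟩ : Fin n)) (by
        intro a b hab
        exact rnk_inj idx h hidx (congrArg Fin.val hab))
    exact not_finite_iff_infinite.mpr inferInstance hfin
  obtain ⟨x, hx⟩ := hub
  obtain ⟨z, hz⟩ := rnk_surj_aux idx h hidx (rnk idx h hidx x) x rfl n hx
  exact ⟨z, hz⟩

end Rank

/-- the ω-labeling lemma -/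
lemma exists_nat_labeling (S : Type*) [PartialOrder S] [Countable S] [Infinite S]
    (h : ∀ x : S, {y : S | y < x}.Finite) :
    ∃ g : ℕ → S, Function.Bijective g ∧ ∀ i j : ℕ, g i < g j → i < j := by
  obtain ⟨idx, hidx⟩ := exists_injective_nat S
  have hbij : Function.Bijective (rnk idx h hidx) := ⟨rnk_inj idx h hidx, rnk_surj idx h hidx⟩
  let E := Equiv.ofBijective _ hbij
  refine ⟨E.symm, E.symm.bijective, ?_⟩
  intro i j hij
  have h1 : rnk idx h hidx (E.symm i) < rnk idx h hidx (E.symm j) :=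
    rnk_lt_of_kval_lt idx h hidx (kval_lt_of_lt idx h hij)
  have h2 : rnk idx h hidx (E.symm i) = i := E.apply_symm_apply i
  have h3 : rnk idx h hidx (E.symm j) = j := E.apply_symm_apply j
  omega



/-- From a suitable partition (B, Bᶜ) one gets a ℤ-labeling. -/
lemma label_of_partition {Ψ : Type*} [PartialOrder Ψ] [Countable Ψ]
    (B : Set Ψ)
    (hup : ∀ b ∈ B, ∀ y : Ψ, b ≤ y → y ∈ B)
    (hAfin : ∀ a ∉ B, {y : Ψ | y ∉ B ∧ a < y}.Finite)
    (hBfin : ∀ b ∈ B, {y : Ψ | y ∈ B ∧ y < b}.Finite)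
    (hAinf : {x : Ψ | x ∉ B}.Infinite) (hBinf : B.Infinite) :
    ∃ f : ℤ → Ψ, Function.Bijective f ∧ ∀ i j : ℤ, f i < f j → i < j := by
  haveI : Infinite ↥B := hBinf.to_subtype
  haveI : Infinite ↥{x : Ψ | x ∉ B} := hAinf.to_subtype
  haveI : Infinite (↥{x : Ψ | x ∉ B})ᵒᵈ := inferInstanceAs (Infinite ↥{x : Ψ | x ∉ B})
  haveI : Countable (↥{x : Ψ | x ∉ B})ᵒᵈ := inferInstanceAs (Countable ↥{x : Ψ | x ∉ B})
  -- ω-labeling of B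
  obtain ⟨gB, hgBbij, hgBmono⟩ := exists_nat_labeling ↥B (by
    intro b
    have h1 : {y : ↥B | y < b} ⊆ (Subtype.val) ⁻¹' {y : Ψ | y ∈ B ∧ y < ↑b} := by
      intro y hy
      exact ⟨y.2, Subtype.coe_lt_coe.mpr hy⟩
    exact Set.Finite.subset ((hBfin ↑b b.2).preimage (Subtype.val_injective.injOn)) h1)
  -- ω-labeling of the dual of the complement
  obtain ⟨gA, hgAbij, hgAmono⟩ := exists_nat_labeling (↥{x : Ψ | x ∉ B})ᵒᵈ (by
    intro a
    have h1 : {y : (↥{x : Ψ | x ∉ B})ᵒᵈ | y < a}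
        ⊆ (fun (y : (↥{x : Ψ | x ∉ B})ᵒᵈ) => ((OrderDual.ofDual y : ↥{x : Ψ | x ∉ B}) : Ψ))
          ⁻¹' {y : Ψ | y ∉ B ∧ ↑(OrderDual.ofDual a) < y} := by
      intro y hy
      exact ⟨(OrderDual.ofDual y).2, Subtype.coe_lt_coe.mpr hy⟩
    refine Set.Finite.subset (Set.Finite.preimage ?_ (hAfin ↑(OrderDual.ofDual a) (OrderDual.ofDual a).2)) h1
    intro u _ v _ huv
    exact OrderDual.ofDual.injective (Subtype.val_injective huv))
  refine ⟨fun i => match i with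
    | Int.ofNat k => ↑(gB k)
    | Int.negSucc k => ↑(OrderDual.ofDual (gA k)), ⟨?_, ?_⟩, ?_⟩
  · -- injective
    intro i j hij
    match i, j with
    | Int.ofNat k, Int.ofNat l =>
      simp only at hij
      have := hgBbij.1 (Subtype.val_injective hij)
      rw [this]
    | Int.ofNat k, Int.negSucc l =>
      exfalso
      have h1 : (↑(gB k) : Ψ) ∈ B := (gB k).2
      have h2 : (↑(OrderDual.ofDual (gA l)) : Ψ) ∉ B := (OrderDual.ofDual (gA l)).2
      simp only at hij
      rw [hij] at h1
      exact h2 h1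
    | Int.negSucc k, Int.ofNat l =>
      exfalso
      have h1 : (↑(gB l) : Ψ) ∈ B := (gB l).2
      have h2 : (↑(OrderDual.ofDual (gA k)) : Ψ) ∉ B := (OrderDual.ofDual (gA k)).2
      simp only at hij
      rw [← hij] at h1
      exact h2 h1
    | Int.negSucc k, Int.negSucc l =>
      simp only at hij
      have := hgAbij.1 (OrderDual.ofDual.injective (Subtype.val_injective hij))
      rw [this]
  · -- surjective
    intro x
    by_cases hx : x ∈ B
    · obtain ⟨k, hk⟩ := hgBbij.2 ⟨x, hx⟩
      exact ⟨Int.ofNat k, by simp [hk]⟩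
    · obtain ⟨k, hk⟩ := hgAbij.2 (OrderDual.toDual ⟨x, hx⟩)
      refine ⟨Int.negSucc k, ?_⟩
      simp only [hk]
      rfl
  · -- monotone
    intro i j hij
    match i, j with
    | Int.ofNat k, Int.ofNat l =>
      simp only at hij
      have h1 : gB k < gB l := Subtype.coe_lt_coe.mp hij
      have := hgBmono k l h1
      simpa [Int.ofNat_eq_natCast] using this
    | Int.ofNat k, Int.negSucc l =>
      exfalso
      have h1 : (↑(gB k) : Ψ) ∈ B := (gB k).2
      have h2 := hup _ h1 _ (le_of_lt hij)
      exact (OrderDual.ofDual (gA l)).2 h2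
    | Int.negSucc k, Int.ofNat l =>
      simp only [Int.negSucc_eq, Int.ofNat_eq_natCast]
      omega
    | Int.negSucc k, Int.negSucc l =>
      simp only at hij
      have h1 : OrderDual.ofDual (gA k) < OrderDual.ofDual (gA l) := Subtype.coe_lt_coe.mp hij
      have h2 : gA l < gA k := h1
      have := hgAmono l k h2
      simp only [Int.negSucc_eq]
      omega



/-- Forward helper: a ℤ-labeled past-finite causet has infinitely many minimal elements. -/
lemma minimals_infinite {Ψ : Type*} [PartialOrder Ψ] (f : ℤ → Ψ)
    (hbij : Function.Bijective f) (hmono : ∀ i j : ℤ, f i < f j → i < j)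
    (hPF : ∀ x : Ψ, {y : Ψ | y < x}.Finite) :
    {x : Ψ | ∀ y : Ψ, ¬ y < x}.Infinite := by
  classical
  by_contra hfin
  rw [Set.not_infinite] at hfin
  have hIfin : (f ⁻¹' {x : Ψ | ∀ y : Ψ, ¬ y < x}).Finite := hfin.preimage hbij.1.injOn
  obtain ⟨m, hm⟩ := hIfin.bddBelow
  set x := f (m - 1) with hxdef
  have hDfin : (insert x {y : Ψ | y < x}).Finite := (hPF x).insert x
  have hDne : hDfin.toFinset.Nonempty := ⟨x, by simp⟩
  obtain ⟨z, hzmem, hzmin⟩ : ∃ z ∈ hDfin.toFinset, ∀ y ∈ hDfin.toFinset, ¬ y < z := by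
    obtain ⟨z, hz⟩ := Finset.exists_minimal (s := hDfin.toFinset) hDne
    exact ⟨z, hz.1, fun y hy hlt => absurd (hz.2 hy hlt.le) hlt.not_ge⟩
  have hzD : z ∈ insert x {y : Ψ | y < x} := by simpa using hzmem
  have hzle : z ≤ x := by
    rcases hzD with rfl | hz
    · exact le_refl _
    · exact le_of_lt hz
  have hzminΨ : ∀ y : Ψ, ¬ y < z := by
    intro y hy
    have hyx : y < x := lt_of_lt_of_le hy hzle
    exact hzmin y (by simpa using Or.inr hyx) hy
  obtain ⟨i, hi⟩ := hbij.2 z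
  have hiI : i ∈ f ⁻¹' {x : Ψ | ∀ y : Ψ, ¬ y < x} := by
    simp only [Set.mem_preimage, Set.mem_setOf_eq, hi]
    exact hzminΨ
  have hmi : m ≤ i := hm hiI
  rcases lt_or_eq_of_le hzle with h1 | h1
  · have := hmono i (m - 1) (by rw [hi]; exact h1)
    omega
  · have : i = m - 1 := hbij.1 (by rw [hi, h1])
    omega

end Stmt2Aux

open Stmt2Aux in
/-- A countably infinite causal set Ψ admits a natural labeling by ℤ iff
(i) Ψ is two-way infinite, or (ii) Ψ is past-finite with infinitely many minimal
elements, or (iii) Ψ is future-finite with infinitely many maximal elements. -/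
theorem stmt_2 {Ψ : Type*} [PartialOrder Ψ] [Countable Ψ] [Infinite Ψ]
    (hlocfin : ∀ x y : Ψ, {z : Ψ | x < z ∧ z < y}.Finite) :
    (∃ f : ℤ → Ψ, Function.Bijective f ∧ ∀ i j : ℤ, f i < f j → i < j) ↔
      ((¬ (∀ x : Ψ, {y : Ψ | y < x}.Finite) ∧ ¬ (∀ x : Ψ, {y : Ψ | x < y}.Finite)) ∨
       ((∀ x : Ψ, {y : Ψ | y < x}.Finite) ∧ {x : Ψ | ∀ y : Ψ, ¬ y < x}.Infinite) ∨
       ((∀ x : Ψ, {y : Ψ | x < y}.Finite) ∧ {x : Ψ | ∀ y : Ψ, ¬ x < y}.Infinite)) := by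
  constructor
  · rintro ⟨f, hbij, hmono⟩
    by_cases hPF : ∀ x : Ψ, {y : Ψ | y < x}.Finite
    · exact Or.inr (Or.inl ⟨hPF, minimals_infinite f hbij hmono hPF⟩)
    · by_cases hFF : ∀ x : Ψ, {y : Ψ | x < y}.Finite
      · refine Or.inr (Or.inr ⟨hFF, ?_⟩)
        -- dualize
        have hgbij : Function.Bijective (fun i : ℤ => OrderDual.toDual (f (-i))) := by
          constructor
          · intro a b hab
            have h1 : f (-a) = f (-b) := congrArg OrderDual.ofDual hab
            have := hbij.1 h1
            omega
          · intro a
            obtain ⟨i, hi⟩ := hbij.2 (OrderDual.ofDual a)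
            exact ⟨-i, by simp [hi]⟩
        have hgmono : ∀ i j : ℤ, (fun i : ℤ => OrderDual.toDual (f (-i))) i
            < (fun i : ℤ => OrderDual.toDual (f (-i))) j → i < j := by
          intro i j hij
          have : f (-j) < f (-i) := hij
          have := hmono (-j) (-i) this
          omega
        have hPFd : ∀ x : Ψᵒᵈ, {y : Ψᵒᵈ | y < x}.Finite := fun x => hFF (OrderDual.ofDual x)
        have := minimals_infinite (fun i : ℤ => OrderDual.toDual (f (-i))) hgbij hgmono hPFd
        exact this
      · exact Or.inl ⟨hPF, hFF⟩
  · rintro (⟨hnPF, hnFF⟩ | ⟨hPF, hmin⟩ | ⟨hFF, hmax⟩)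
    · -- case (i) : two-way infinite
      push_neg at hnPF hnFF
      obtain ⟨astar, ha⟩ := hnPF
      obtain ⟨cstar, hc⟩ := hnFF
      have haInf : {y : Ψ | y < astar}.Infinite := ha
      have hcInf : {y : Ψ | cstar < y}.Infinite := hc
      haveI : Nonempty ↥{v : Ψ | {y : Ψ | y < v}.Infinite} := ⟨⟨astar, haInf⟩⟩
      obtain ⟨w, hw⟩ := exists_surjective_nat ↥{v : Ψ | {y : Ψ | y < v}.Infinite}
      obtain ⟨e, he⟩ := exists_surjective_nat Ψ
      set C : Set Ψ := {c | ∃ k : ℕ, e k < c ∧ ∀ j ≤ k, ¬ c ≤ ↑(w j)} with hCdef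
      set B : Set Ψ := {x | ∃ c ∈ C, c ≤ x} with hBdef
      have hCB : C ⊆ B := fun c hc' => ⟨c, hc', le_refl c⟩
      have hload : ∀ v : Ψ, {y : Ψ | y < v}.Infinite → {c | c ∈ C ∧ c < v}.Finite := by
        intro v hv
        obtain ⟨j₀, hj₀⟩ := hw ⟨v, hv⟩
        have hWj₀ : (↑(w j₀) : Ψ) = v := by rw [hj₀]
        have hsub : {c | c ∈ C ∧ c < v} ⊆ ⋃ k ∈ Set.Iio j₀, {z : Ψ | e k < z ∧ z < v} := by
          rintro c ⟨⟨k, hek, hcond⟩, hcv⟩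
          have hk : k < j₀ := by
            by_contra hge
            push_neg at hge
            exact hcond j₀ hge (by rw [hWj₀]; exact le_of_lt hcv)
          exact Set.mem_biUnion hk ⟨hek, hcv⟩
        exact Set.Finite.subset
          (Set.Finite.biUnion (Set.finite_Iio j₀) (fun k _ => hlocfin (e k) v)) hsub
      have hupB : ∀ b ∈ B, ∀ y : Ψ, b ≤ y → y ∈ B := by
        rintro b ⟨c, hc', hcb⟩ y hby
        exact ⟨c, hc', hcb.trans hby⟩
      have hBfin : ∀ b ∈ B, {y : Ψ | y ∈ B ∧ y < b}.Finite := by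
        intro b _
        by_cases hpb : {y : Ψ | y < b}.Finite
        · exact hpb.subset (fun y hy => hy.2)
        · have hS : {c | c ∈ C ∧ c < b}.Finite := hload b hpb
          have hsub : {y : Ψ | y ∈ B ∧ y < b}
              ⊆ ⋃ c ∈ {c | c ∈ C ∧ c < b}, ({z : Ψ | c < z ∧ z < b} ∪ {c}) := by
            rintro y ⟨⟨c, hcC, hcy⟩, hyb⟩
            have hcb : c < b := lt_of_le_of_lt hcy hyb
            refine Set.mem_biUnion (⟨hcC, hcb⟩ : c ∈ {c | c ∈ C ∧ c < b}) ?_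
            rcases lt_or_eq_of_le hcy with h1 | h1
            · exact Or.inl ⟨h1, hyb⟩
            · exact Or.inr (by simp [h1.symm])
          exact Set.Finite.subset
            (hS.biUnion (fun c _ => (hlocfin c b).union (Set.finite_singleton c))) hsub
      have hAfin : ∀ a ∉ B, {y : Ψ | y ∉ B ∧ a < y}.Finite := by
        intro a _
        obtain ⟨k, hk⟩ := he a
        have hsub : {y : Ψ | y ∉ B ∧ a < y}
            ⊆ ⋃ j ∈ Set.Iic k, ({z : Ψ | a < z ∧ z < ↑(w j)} ∪ {(↑(w j) : Ψ)}) := by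
          rintro y ⟨hyB, hay⟩
          have hyC : y ∉ C := fun hyC => hyB (hCB hyC)
          have hnot : ¬ (e k < y ∧ ∀ j ≤ k, ¬ y ≤ ↑(w j)) := fun hcon => hyC ⟨k, hcon⟩
          push_neg at hnot
          obtain ⟨j, hjk, hyle⟩ := hnot (by rw [hk]; exact hay)
          rcases lt_or_eq_of_le hyle with h1 | h1
          · exact Set.mem_biUnion hjk (Or.inl ⟨hay, h1⟩)
          · exact Set.mem_biUnion hjk (Or.inr (by simp [h1]))
        exact Set.Finite.subset
          (Set.Finite.biUnion (Set.finite_Iic k)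
            (fun j _ => (hlocfin a ↑(w j)).union (Set.finite_singleton _))) hsub
      have hBinf : B.Infinite := by
        obtain ⟨k, hk⟩ := he cstar
        have hRfin : (⋃ j ∈ Set.Iic k, ({z : Ψ | cstar < z ∧ z < ↑(w j)} ∪ {(↑(w j) : Ψ)})).Finite :=
          Set.Finite.biUnion (Set.finite_Iic k)
            (fun j _ => (hlocfin cstar ↑(w j)).union (Set.finite_singleton _))
        have hsub : {y : Ψ | cstar < y} \
            (⋃ j ∈ Set.Iic k, ({z : Ψ | cstar < z ∧ z < ↑(w j)} ∪ {(↑(w j) : Ψ)})) ⊆ B := by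
          rintro y ⟨hcy, hyR⟩
          refine hCB ⟨k, by rw [hk]; exact hcy, ?_⟩
          intro j hjk hyle
          rcases lt_or_eq_of_le hyle with h1 | h1
          · exact hyR (Set.mem_biUnion hjk (Or.inl ⟨hcy, h1⟩))
          · exact hyR (Set.mem_biUnion hjk (Or.inr (by simp [h1])))
        exact Set.Infinite.mono hsub (hcInf.diff hRfin)
      have hAinf : {x : Ψ | x ∉ B}.Infinite := by
        have hS : {c | c ∈ C ∧ c < astar}.Finite := hload astar haInf
        have hRfin : (⋃ c ∈ {c | c ∈ C ∧ c < astar},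
            ({z : Ψ | c < z ∧ z < astar} ∪ {c})).Finite :=
          hS.biUnion (fun c _ => (hlocfin c astar).union (Set.finite_singleton c))
        have hsub : {y : Ψ | y < astar} \
            (⋃ c ∈ {c | c ∈ C ∧ c < astar}, ({z : Ψ | c < z ∧ z < astar} ∪ {c}))
            ⊆ {x : Ψ | x ∉ B} := by
          rintro y ⟨hya, hyR⟩
          intro hyB
          obtain ⟨c, hcC, hcy⟩ := hyB
          have hca : c < astar := lt_of_le_of_lt hcy hya
          rcases lt_or_eq_of_le hcy with h1 | h1
          · exact hyR (Set.mem_biUnion (⟨hcC, hca⟩ : c ∈ {c | c ∈ C ∧ c < astar})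
              (Or.inl ⟨h1, hya⟩))
          · exact hyR (Set.mem_biUnion (⟨hcC, hca⟩ : c ∈ {c | c ∈ C ∧ c < astar})
              (Or.inr (by simp [h1.symm])))
        exact Set.Infinite.mono hsub (haInf.diff hRfin)
      exact label_of_partition B hupB hAfin hBfin hAinf hBinf
    · -- case (ii) : past-finite, infinitely many minimal elements
      have emb := Set.Infinite.natEmbedding _ hmin
      set g : ℕ → Ψ := fun n => ↑(emb n) with hgdef
      have hginj : Function.Injective g := fun a b hab =>
        emb.injective (Subtype.val_injective hab)
      have hgmin : ∀ n, g n ∈ {x : Ψ | ∀ y : Ψ, ¬ y < x} := fun n => (emb n).2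
      set M : Set Ψ := Set.range (fun n => g (2 * n)) with hMdef
      have hMmin : ∀ x ∈ M, ∀ y : Ψ, ¬ y < x := by
        rintro x ⟨n, rfl⟩
        exact hgmin (2 * n)
      refine label_of_partition Mᶜ ?_ ?_ ?_ ?_ ?_
      · intro b hb y hby
        intro hyM
        rcases lt_or_eq_of_le hby with h1 | h1
        · exact hMmin y hyM b h1
        · exact hb (h1 ▸ hyM)
      · intro a ha
        refine Set.Finite.subset Set.finite_empty ?_
        rintro y ⟨hyM, hay⟩
        have hyM' : y ∈ M := by simpa using hyM
        exact absurd hay (hMmin y hyM' a)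
      · intro b _
        exact (hPF b).subset (fun y hy => hy.2)
      · have : {x : Ψ | x ∉ Mᶜ} = M := by ext x; simp
        rw [this]
        exact Set.infinite_range_of_injective (fun a b hab => by
          have := hginj hab; omega)
      · have hsub : Set.range (fun n => g (2 * n + 1)) ⊆ Mᶜ := by
          rintro x ⟨n, rfl⟩
          rintro ⟨m, hm⟩
          have := hginj hm
          omega
        exact Set.Infinite.mono hsub (Set.infinite_range_of_injective
          (fun a b hab => by have := hginj hab; omega))
    · -- case (iii) : future-finite, infinitely many maximal elements
      have emb := Set.Infinite.natEmbedding _ hmax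
      set g : ℕ → Ψ := fun n => ↑(emb n) with hgdef
      have hginj : Function.Injective g := fun a b hab =>
        emb.injective (Subtype.val_injective hab)
      have hgmax : ∀ n, g n ∈ {x : Ψ | ∀ y : Ψ, ¬ x < y} := fun n => (emb n).2
      set M : Set Ψ := Set.range (fun n => g (2 * n)) with hMdef
      have hMmax : ∀ x ∈ M, ∀ y : Ψ, ¬ x < y := by
        rintro x ⟨n, rfl⟩
        exact hgmax (2 * n)
      refine label_of_partition M ?_ ?_ ?_ ?_ ?_
      · intro b hb y hby
        rcases lt_or_eq_of_le hby with h1 | h1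
        · exact absurd h1 (hMmax b hb y)
        · exact h1 ▸ hb
      · intro a _
        exact (hFF a).subset (fun y hy => hy.2)
      · intro b _
        refine Set.Finite.subset Set.finite_empty ?_
        rintro y ⟨hyM, hyb⟩
        exact absurd hyb (hMmax y hyM b)
      · have hsub : Set.range (fun n => g (2 * n + 1)) ⊆ {x : Ψ | x ∉ M} := by
          rintro x ⟨n, rfl⟩
          rintro ⟨m, hm⟩
          have := hginj hm
          omega
        exact Set.Infinite.mono hsub (Set.infinite_range_of_injective
          (fun a b hab => by have := hginj hab; omega))
      · exact Set.infinite_range_of_injective (fun a b hab => by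
          have := hginj hab; omega)
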